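/- arXiv:1104.4936 — 4 statements merged into one kernel-verified Lean document; each statement's English description precedes it below -/
import Mathlib

section
/- Let σ > 0, μ ∈ ℝ, q₂₁ > 0, q₁₂ > 0, and set π₂ = q₁₂/(q₁₂+q₂₁), π₁ = q₂₁/(q₁₂+q₂₁), Θ = −√(μ²+2q₂₁σ²)/σ², Δ = μ/σ². For b₁ < b₂ and any constant v ∈ ℝ, the function Π(z) = π₂ − e^{Δ(z−b₁)} · (sinh(Θ(b₂−z))/sinh(Θ(b₂−b₁))) · (π₂ − v) satisfies the ODE (σ²/2)Π''(z) − μΠ'(z) − q₂₁Π(z) = −q₁₂π₁ on [b₁,b₂], with Π(b₁) = v and Π(b₂) = π₂. -/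
theorem stationary_upper_interval (σ μ q12 q21 b₁ b₂ v : ℝ)
    (hσ : 0 < σ) (h12 : 0 < q12) (h21 : 0 < q21) (hb : b₁ < b₂) :
    let π₁ := q21 / (q12 + q21)
    let π₂ := q12 / (q12 + q21)
    let Θ := -Real.sqrt (μ^2 + 2*q21*σ^2) / σ^2
    let Δ := μ / σ^2
    let Pf : ℝ → ℝ := fun z =>
      π₂ - Real.exp (Δ*(z - b₁)) * (Real.sinh (Θ*(b₂ - z)) / Real.sinh (Θ*(b₂ - b₁))) * (π₂ - v)
    (∀ z ∈ Set.Icc b₁ b₂,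
      σ^2/2 * deriv (deriv Pf) z - μ * deriv Pf z - q21 * Pf z = -(q12 * π₁)) ∧
    Pf b₁ = v ∧ Pf b₂ = π₂ := by
  intro π₁ π₂ Θ Δ Pf
  have hσ2 : (σ:ℝ)^2 ≠ 0 := by positivity
  have hs_pos : 0 < Real.sqrt (μ^2 + 2*q21*σ^2) := Real.sqrt_pos.mpr (by positivity)
  have hΘneg : Θ < 0 := div_neg_of_neg_of_pos (by linarith) (by positivity)
  have hDarg : Θ * (b₂ - b₁) ≠ 0 := by
    have : Θ * (b₂ - b₁) < 0 := mul_neg_of_neg_of_pos hΘneg (by linarith)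
    linarith
  have hD : Real.sinh (Θ * (b₂ - b₁)) ≠ 0 := Real.sinh_ne_zero.mpr hDarg
  set D := Real.sinh (Θ * (b₂ - b₁)) with hDdef
  set k : ℝ := π₂ - v with hk
  -- first derivative
  set P1 : ℝ → ℝ := fun z =>
    -((Δ * (Real.exp (Δ*(z - b₁)) * Real.sinh (Θ*(b₂ - z)))
       - Θ * (Real.exp (Δ*(z - b₁)) * Real.cosh (Θ*(b₂ - z)))) / D * k) with hP1def
  set P2 : ℝ → ℝ := fun z =>
    -((Δ^2 * (Real.exp (Δ*(z - b₁)) * Real.sinh (Θ*(b₂ - z)))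
       - 2*Δ*Θ * (Real.exp (Δ*(z - b₁)) * Real.cosh (Θ*(b₂ - z)))
       + Θ^2 * (Real.exp (Δ*(z - b₁)) * Real.sinh (Θ*(b₂ - z)))) / D * k) with hP2def
  have hE : ∀ z : ℝ, HasDerivAt (fun z => Real.exp (Δ*(z - b₁)))
      (Real.exp (Δ*(z - b₁)) * Δ) z := by
    intro z
    have h : HasDerivAt (fun z : ℝ => Δ*(z - b₁)) Δ z := by
      simpa using ((hasDerivAt_id z).sub_const b₁).const_mul Δ
    simpa using h.exp
  have hinner : ∀ z : ℝ, HasDerivAt (fun z : ℝ => Θ*(b₂ - z)) (-Θ) z := by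
    intro z
    simpa using ((hasDerivAt_id z).const_sub b₂).const_mul Θ
  have hS : ∀ z : ℝ, HasDerivAt (fun z => Real.sinh (Θ*(b₂ - z)))
      (Real.cosh (Θ*(b₂ - z)) * (-Θ)) z := fun z => (hinner z).sinh
  have hC : ∀ z : ℝ, HasDerivAt (fun z => Real.cosh (Θ*(b₂ - z)))
      (Real.sinh (Θ*(b₂ - z)) * (-Θ)) z := fun z => (hinner z).cosh
  have h1 : ∀ z : ℝ, HasDerivAt Pf (P1 z) z := by
    intro z
    have h := (((hE z).mul ((hS z).div_const D)).mul_const k).const_sub π₂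
    have heq : -((Real.exp (Δ*(z - b₁)) * Δ * (Real.sinh (Θ*(b₂ - z)) / D)
        + Real.exp (Δ*(z - b₁)) * (Real.cosh (Θ*(b₂ - z)) * (-Θ) / D)) * k) = P1 z := by
      rw [hP1def]; ring
    rw [← heq]
    exact h
  have h2 : ∀ z : ℝ, HasDerivAt P1 (P2 z) z := by
    intro z
    have h := (((((hE z).mul (hS z)).const_mul Δ).sub
      (((hE z).mul (hC z)).const_mul Θ)).div_const D).mul_const k |>.neg
    have heq : -((Δ * (Real.exp (Δ*(z - b₁)) * Δ * Real.sinh (Θ*(b₂ - z))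
          + Real.exp (Δ*(z - b₁)) * (Real.cosh (Θ*(b₂ - z)) * (-Θ)))
        - Θ * (Real.exp (Δ*(z - b₁)) * Δ * Real.cosh (Θ*(b₂ - z))
          + Real.exp (Δ*(z - b₁)) * (Real.sinh (Θ*(b₂ - z)) * (-Θ)))) / D * k) = P2 z := by
      rw [hP2def]; ring
    rw [← heq]
    exact h
  have hd1 : deriv Pf = P1 := funext fun z => (h1 z).deriv
  have hs2 : (Real.sqrt (μ^2 + 2*q21*σ^2))^2 = μ^2 + 2*q21*σ^2 :=
    Real.sq_sqrt (by positivity)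
  have key1 : σ^2/2*(Δ^2 + Θ^2) - μ*Δ - q21 = 0 := by
    show σ^2/2*((μ / σ^2)^2 + (-Real.sqrt (μ^2 + 2*q21*σ^2) / σ^2)^2) - μ*(μ / σ^2) - q21 = 0
    field_simp
    linarith [hs2, Real.sq_sqrt (show (0:ℝ) ≤ μ ^ 2 + σ ^ 2 * 2 * q21 by positivity)]
  have key2 : σ^2*Δ*Θ - μ*Θ = 0 := by
    show σ^2*(μ / σ^2)*Θ - μ*Θ = 0
    field_simp
    ring
  have key3 : q21 * π₂ = q12 * π₁ := by
    show q21 * (q12 / (q12 + q21)) = q12 * (q21 / (q12 + q21))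
    ring
  refine ⟨?_, ?_, ?_⟩
  · intro z _
    have hPfz : Pf z = π₂ - Real.exp (Δ*(z - b₁)) * (Real.sinh (Θ*(b₂ - z)) / D) * k := rfl
    rw [hd1, (h2 z).deriv, hPfz]
    simp only [hP1def, hP2def]
    linear_combination (-(Real.exp (Δ*(z - b₁)) * Real.sinh (Θ*(b₂ - z)) * k / D)) * key1
      + (Real.exp (Δ*(z - b₁)) * Real.cosh (Θ*(b₂ - z)) * k / D) * key2 - key3
  · show π₂ - Real.exp (Δ*(b₁ - b₁)) * (Real.sinh (Θ*(b₂ - b₁)) / D) * (π₂ - v) = v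
    rw [sub_self, mul_zero, Real.exp_zero, div_self hD]
    ring
  · show π₂ - Real.exp (Δ*(b₂ - b₁)) * (Real.sinh (Θ*(b₂ - b₂)) / D) * (π₂ - v) = π₂
    rw [sub_self, mul_zero, Real.sinh_zero, zero_div]
    ring
end

section
/- With σ > 0, μ ∈ ℝ, q₂₁ > 0, Θ = −√(μ²+2q₂₁σ²)/σ², Δ = μ/σ², and b₁ < b₂, the function H(z) = 1 − e^{Δ(z−b₁)} sinh(Θ(b₂−z))/sinh(Θ(b₂−b₁)) satisfies H(b₁) = 0, H(b₂) = 1, and H is strictly increasing on [b₁, b₂]. -/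
lemma aux_pos (Θ Δ u : ℝ) (hΘ : Θ < 0) (hΔ : |Δ| < -Θ) :
    0 < Δ * Real.sinh u - Θ * Real.cosh u := by
  have h1 : |Real.sinh u| < Real.cosh u := by
    have hc := Real.cosh_pos u
    have hsq : Real.sinh u ^ 2 < Real.cosh u ^ 2 := by
      have := Real.cosh_sq u; nlinarith
    nlinarith [abs_nonneg (Real.sinh u), sq_abs (Real.sinh u)]
  have h2 : |Δ * Real.sinh u| ≤ |Δ| * Real.cosh u := by
    rw [abs_mul]
    exact mul_le_mul_of_nonneg_left h1.le (abs_nonneg _)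
  have h3 : |Δ| * Real.cosh u < (-Θ) * Real.cosh u :=
    mul_lt_mul_of_pos_right hΔ (Real.cosh_pos u)
  have h4 := neg_abs_le (Δ * Real.sinh u)
  linarith

theorem jump_size_distribution (σ μ q21 b₁ b₂ : ℝ)
    (hσ : 0 < σ) (h21 : 0 < q21) (hb : b₁ < b₂) :
    let Θ := -Real.sqrt (μ^2 + 2*q21*σ^2) / σ^2
    let Δ := μ / σ^2
    let H : ℝ → ℝ := fun z =>
      1 - Real.exp (Δ*(z - b₁)) * (Real.sinh (Θ*(b₂ - z)) / Real.sinh (Θ*(b₂ - b₁)))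
    H b₁ = 0 ∧ H b₂ = 1 ∧ StrictMonoOn H (Set.Icc b₁ b₂) := by
  intro Θ Δ H
  have hσ2 : (0:ℝ) < σ^2 := by positivity
  have hpos : (0:ℝ) < μ^2 + 2*q21*σ^2 := by positivity
  have hΘ : Θ < 0 := by
    have h : 0 < Real.sqrt (μ^2 + 2*q21*σ^2) := Real.sqrt_pos.mpr hpos
    exact div_neg_of_neg_of_pos (by linarith) hσ2
  have hΔΘ : |Δ| < -Θ := by
    have h1 : |μ| < Real.sqrt (μ^2 + 2*q21*σ^2) := by
      rw [← Real.sqrt_sq_eq_abs]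
      exact Real.sqrt_lt_sqrt (sq_nonneg μ) (by nlinarith)
    show |μ / σ^2| < -(-Real.sqrt (μ^2 + 2*q21*σ^2) / σ^2)
    rw [abs_div, abs_of_pos hσ2, neg_div, neg_neg]
    exact (div_lt_div_iff_of_pos_right hσ2).mpr h1
  -- the denominator
  set S : ℝ := Real.sinh (Θ*(b₂ - b₁)) with hS
  have hSneg : S < 0 :=
    Real.sinh_neg_iff.mpr (mul_neg_of_neg_of_pos hΘ (by linarith))
  have hSne : S ≠ 0 := ne_of_lt hSneg
  refine ⟨?_, ?_, ?_⟩
  · show 1 - Real.exp (Δ*(b₁ - b₁)) * (Real.sinh (Θ*(b₂ - b₁)) / S) = 0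
    rw [div_self hSne]
    simp
  · show 1 - Real.exp (Δ*(b₂ - b₁)) * (Real.sinh (Θ*(b₂ - b₂)) / S) = 1
    simp
  · -- strict monotonicity via derivative
    have hderiv : ∀ x : ℝ, HasDerivAt H
        (-(Real.exp (Δ*(x - b₁)) * (Δ * Real.sinh (Θ*(b₂ - x)) - Θ * Real.cosh (Θ*(b₂ - x)))) / S) x := by
      intro x
      have h1 : HasDerivAt (fun z => Δ*(z - b₁)) Δ x := by
        simpa using ((hasDerivAt_id x).sub_const b₁).const_mul Δ
      have h2 : HasDerivAt (fun z => Θ*(b₂ - z)) (-Θ) x := by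
        simpa using ((hasDerivAt_const x b₂).sub (hasDerivAt_id x)).const_mul Θ
      have h3 := h1.exp
      have h4 := (h2.sinh).div_const S
      have h6 := ((hasDerivAt_const x (1:ℝ)).sub (h3.mul h4))
      refine h6.congr_deriv ?_
      field_simp
      ring
    have hcont : ContinuousOn H (Set.Icc b₁ b₂) :=
      fun x _ => ((hderiv x).continuousAt).continuousWithinAt
    apply strictMonoOn_of_deriv_pos (convex_Icc b₁ b₂) hcont
    intro x hx
    rw [(hderiv x).deriv]
    have hpos' := aux_pos Θ Δ (Θ*(b₂ - x)) hΘ hΔΘ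
    have he : 0 < Real.exp (Δ*(x - b₁)) := Real.exp_pos _
    have : Real.exp (Δ*(x - b₁)) * (Δ * Real.sinh (Θ*(b₂ - x)) - Θ * Real.cosh (Θ*(b₂ - x))) > 0 :=
      mul_pos he hpos'
    exact div_pos_of_neg_of_neg (by linarith) hSneg
end

section
/- Let V : (α, β) → ℝ be concave, let z ∈ (α, β), and let g₊, g₋ : (0,ε) → ℝ be functions with g±(h) → 1/2 as h → 0⁺. If g₋(h)[V(z) − V(z−h)] = g₊(h)[V(z+h) − V(z)] + o(h) as h → 0⁺, then the left and right derivatives of V at z coincide, i.e. V is differentiable at z. -/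
open Asymptotics Topology Filter Set

theorem concave_differentiable_of_balance (α β z : ℝ) (V : ℝ → ℝ)
    (hz : z ∈ Set.Ioo α β)
    (hconc : ConcaveOn ℝ (Set.Ioo α β) V)
    (gp gm : ℝ → ℝ)
    (hgp : Filter.Tendsto gp (𝓝[>] 0) (𝓝 (1/2)))
    (hgm : Filter.Tendsto gm (𝓝[>] 0) (𝓝 (1/2)))
    (hbal : (fun h : ℝ => gm h * (V z - V (z - h)) - gp h * (V (z + h) - V z))
      =o[𝓝[>] 0] fun h : ℝ => h) :
    DifferentiableAt ℝ V z := by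
  obtain ⟨hαz, hzβ⟩ := hz
  set f : ℝ → ℝ := fun x => -V x with hf
  have hconv : ConvexOn ℝ (Set.Ioo α β) f := hconc.neg
  set s : ℝ → ℝ := fun x => (f x - f z) / (x - z) with hs
  -- monotonicity of the secant slopes
  have hsec : ∀ x y : ℝ, x ∈ Set.Ioo α β → y ∈ Set.Ioo α β → x ≠ z → y ≠ z → x ≤ y →
      s x ≤ s y := fun x y hx hy hxz hyz hxy =>
    hconv.secant_mono ⟨hαz, hzβ⟩ hx hy hxz hyz hxy
  -- fixed points on either side
  set wl : ℝ := (α + z) / 2 with hwl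
  set wr : ℝ := (z + β) / 2 with hwr
  have hwlm : wl ∈ Set.Ioo α β := ⟨by simp only [hwl]; linarith, by simp only [hwl]; linarith⟩
  have hwrm : wr ∈ Set.Ioo α β := ⟨by simp only [hwr]; linarith, by simp only [hwr]; linarith⟩
  have hwlz : wl < z := by simp only [hwl]; linarith
  have hwrz : z < wr := by simp only [hwr]; linarith
  -- left limit
  have hmonoL : MonotoneOn s (Set.Ioo α z) := by
    intro x hx y hy hxy
    exact hsec x y ⟨hx.1, hx.2.trans hzβ⟩ ⟨hy.1, hy.2.trans hzβ⟩ hx.2.ne hy.2.ne hxy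
  have hbddL : BddAbove (s '' Set.Ioo α z) := by
    refine ⟨s wr, ?_⟩
    rintro p ⟨x, hx, rfl⟩
    exact hsec x wr ⟨hx.1, hx.2.trans hzβ⟩ hwrm hx.2.ne hwrz.ne' (hx.2.le.trans hwrz.le)
  set L : ℝ := sSup (s '' Set.Ioo α z) with hL
  have htL : Tendsto s (𝓝[<] z) (𝓝 L) :=
    MonotoneOn.tendsto_nhdsWithin_Ioo_left ⟨wl, hwlm.1, hwlz⟩ hmonoL hbddL
  -- right limit
  have hmonoR : MonotoneOn s (Set.Ioo z β) := by
    intro x hx y hy hxy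
    exact hsec x y ⟨hαz.trans hx.1, hx.2⟩ ⟨hαz.trans hy.1, hy.2⟩ hx.1.ne' hy.1.ne' hxy
  have hbddR : BddBelow (s '' Set.Ioo z β) := by
    refine ⟨s wl, ?_⟩
    rintro p ⟨x, hx, rfl⟩
    exact hsec wl x hwlm ⟨hαz.trans hx.1, hx.2⟩ hwlz.ne hx.1.ne' (hwlz.le.trans hx.1.le)
  set R : ℝ := sInf (s '' Set.Ioo z β) with hR
  have htR : Tendsto s (𝓝[>] z) (𝓝 R) :=
    MonotoneOn.tendsto_nhdsWithin_Ioo_right ⟨wr, hwrz, hwrm.2⟩ hmonoR hbddR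
  -- maps from 𝓝[>]0
  have hmapL : Tendsto (fun h : ℝ => z - h) (𝓝[>] (0 : ℝ)) (𝓝[<] z) := by
    apply tendsto_nhdsWithin_of_tendsto_nhds_of_eventually_within
    · have : Tendsto (fun h : ℝ => z - h) (𝓝 0) (𝓝 z) := by
        simpa using (tendsto_const_nhds (x := z)).sub (tendsto_id (x := 𝓝 (0 : ℝ)))
      exact this.mono_left nhdsWithin_le_nhds
    · filter_upwards [self_mem_nhdsWithin] with h (hh : 0 < h)
      simpa using hh
  have hmapR : Tendsto (fun h : ℝ => z + h) (𝓝[>] (0 : ℝ)) (𝓝[>] z) := by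
    apply tendsto_nhdsWithin_of_tendsto_nhds_of_eventually_within
    · have : Tendsto (fun h : ℝ => z + h) (𝓝 0) (𝓝 z) := by
        simpa using (tendsto_const_nhds (x := z)).add (tendsto_id (x := 𝓝 (0 : ℝ)))
      exact this.mono_left nhdsWithin_le_nhds
    · filter_upwards [self_mem_nhdsWithin] with h (hh : 0 < h)
      simpa using hh
  -- the balance limit
  have hdiv : Tendsto (fun h : ℝ =>
      (gm h * (V z - V (z - h)) - gp h * (V (z + h) - V z)) / h) (𝓝[>] 0) (𝓝 0) :=
    hbal.tendsto_div_nhds_zero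
  have hcongr : Tendsto (fun h : ℝ => gp h * s (z + h) - gm h * s (z - h)) (𝓝[>] 0) (𝓝 0) := by
    refine hdiv.congr' ?_
    filter_upwards [self_mem_nhdsWithin] with h (hh : 0 < h)
    have hne : h ≠ 0 := hh.ne'
    have e1 : s (z + h) = (V z - V (z + h)) / h := by
      simp only [hs, hf]
      rw [show z + h - z = h from by ring]
      ring
    have e2 : s (z - h) = (V (z - h) - V z) / h := by
      simp only [hs, hf]
      rw [show z - h - z = -h from by ring, div_neg]
      ring
    rw [e1, e2]
    ring
  have hcomb : Tendsto (fun h : ℝ => gp h * s (z + h) - gm h * s (z - h)) (𝓝[>] 0)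
      (𝓝 (1/2 * R - 1/2 * L)) :=
    (hgp.mul (htR.comp hmapR)).sub (hgm.mul (htL.comp hmapL))
  have hLR : L = R := by
    have := tendsto_nhds_unique hcongr hcomb
    linarith
  -- conclude differentiability
  have hslope : Tendsto (slope f z) (𝓝[≠] z) (𝓝 L) := by
    rw [← nhdsLT_sup_nhdsGT]
    have hse : ∀ x : ℝ, slope f z x = s x := by
      intro x
      simp [slope_def_field, hs]
    rw [tendsto_sup]
    constructor
    · exact (htL.congr fun x => (hse x).symm)
    · exact hLR ▸ (htR.congr fun x => (hse x).symm)
  have hderiv : HasDerivAt f L z := hasDerivAt_iff_tendsto_slope.2 hslope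
  have : HasDerivAt V (-L) z := by
    have := hderiv.neg
    simpa [hf, Pi.neg_def] using this
  exact this.differentiableAt
end

section
/- Let V : (α, β) → ℝ be differentiable with continuous derivative, and suppose the symmetric second difference quotient ψ(z) = lim_{h→0} (V(z+h) − 2V(z) + V(z−h))/h² exists for every z ∈ (α, β) and ψ is continuous. Then V is twice differentiable on (α, β) with V'' = ψ. -/
open Topology Filter Set

/-- Symmetric second difference quotient of a `C²`-at-`z` function tends to the second
derivative. -/
lemma lemA (g g' : ℝ → ℝ) (z c : ℝ)
    (hg : ∀ x, HasDerivAt g (g' x) x)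
    (hg' : HasDerivAt g' c z) :
    Tendsto (fun h : ℝ => (g (z + h) - 2 * g z + g (z - h)) / h ^ 2)
      (𝓝[≠] 0) (𝓝 c) := by
  rw [Metric.tendsto_nhdsWithin_nhds]
  intro ε hε
  have h4 : 0 < ε / 4 := by positivity
  have hO : ∀ᶠ x in 𝓝 z, ‖g' x - g' z - (x - z) • c‖ ≤ ε / 4 * ‖x - z‖ :=
    (Asymptotics.isLittleO_iff.mp (hasDerivAt_iff_isLittleO.mp hg')) h4
  obtain ⟨δ, hδ, hball⟩ := Metric.eventually_nhds_iff.mp hO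
  refine ⟨δ, hδ, ?_⟩
  intro h hne hdist
  replace hne : h ≠ 0 := hne
  rw [Real.dist_eq, sub_zero] at hdist
  set r := |h| with hr
  have hrpos : 0 < r := abs_pos.mpr hne
  -- the auxiliary function
  set φ : ℝ → ℝ := fun t => g (z + t) + g (z - t) - 2 * g z - c * t ^ 2 with hφ
  have hφd : ∀ t, HasDerivAt φ (g' (z + t) - g' (z - t) - 2 * c * t) t := by
    intro t
    have h1 : HasDerivAt (fun t => g (z + t)) (g' (z + t) * 1) t :=
      (hg (z + t)).comp t ((hasDerivAt_id t).const_add z)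
    have h2 : HasDerivAt (fun t => g (z - t)) (g' (z - t) * (-1)) t :=
      (hg (z - t)).comp t ((hasDerivAt_id t).const_sub z)
    have h3 : HasDerivAt (fun t : ℝ => c * t ^ 2) (c * (2 * t)) t := by
      simpa using ((hasDerivAt_pow 2 t).const_mul c)
    have := ((h1.add h2).sub_const (2 * g z)).sub h3
    refine this.congr_deriv ?_
    ring
  have hbound : ∀ t ∈ Icc (0 : ℝ) r, ‖g' (z + t) - g' (z - t) - 2 * c * t‖ ≤ ε / 2 * r := by
    intro t ht
    have htr : |t| < δ := by
      rw [abs_of_nonneg ht.1]; exact lt_of_le_of_lt ht.2 hdist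
    have hb1 := hball (show dist (z + t) z < δ by rw [Real.dist_eq]; simpa using htr)
    have hb2 := hball (show dist (z - t) z < δ by rw [Real.dist_eq]; simpa [abs_sub_comm] using htr)
    simp only [add_sub_cancel_left, smul_eq_mul] at hb1
    have e2 : z - t - z = -t := by ring
    rw [e2] at hb2
    have habs : |t| ≤ r := by rw [abs_of_nonneg ht.1]; exact ht.2
    have key : g' (z + t) - g' (z - t) - 2 * c * t
        = (g' (z + t) - g' z - t * c) - (g' (z - t) - g' z - (-t) * c) := by ring
    rw [Real.norm_eq_abs] at *
    rw [key]
    calc |(g' (z + t) - g' z - t * c) - (g' (z - t) - g' z - (-t) * c)|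
        ≤ |g' (z + t) - g' z - t * c| + |g' (z - t) - g' z - (-t) * c| := abs_sub _ _
      _ ≤ ε / 4 * |t| + ε / 4 * |-t| := by
          refine add_le_add ?_ ?_
          · simpa using hb1
          · simpa using hb2
      _ ≤ ε / 2 * r := by rw [abs_neg]; nlinarith
  have hmvt : ‖φ r - φ 0‖ ≤ ε / 2 * r * ‖r - 0‖ := by
    refine (convex_Icc (0 : ℝ) r).norm_image_sub_le_of_norm_hasDerivWithin_le
      (fun t _ => (hφd t).hasDerivWithinAt) hbound ?_ ?_
    · exact ⟨le_refl 0, hrpos.le⟩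
    · exact ⟨hrpos.le, le_refl r⟩
  have hφ0 : φ 0 = 0 := by simp only [hφ]; ring_nf
  have hφr : |φ r| ≤ ε / 2 * r ^ 2 := by
    rw [hφ0, sub_zero, sub_zero, Real.norm_eq_abs, Real.norm_eq_abs,
      abs_of_nonneg hrpos.le] at hmvt
    calc |φ r| ≤ ε / 2 * r * r := hmvt
      _ = ε / 2 * r ^ 2 := by ring
  -- relate φ r to the quotient numerator
  have hnum : g (z + h) - 2 * g z + g (z - h) - c * h ^ 2 = φ r := by
    rcases abs_cases h with ⟨he, _⟩ | ⟨he, _⟩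
    · rw [hr, he, hφ]; ring
    · rw [hr, he, hφ]; ring_nf
  have hh2 : (0 : ℝ) < h ^ 2 := by positivity
  rw [Real.dist_eq]
  have : (g (z + h) - 2 * g z + g (z - h)) / h ^ 2 - c
      = (g (z + h) - 2 * g z + g (z - h) - c * h ^ 2) / h ^ 2 := by
    field_simp
  rw [this, hnum, abs_div, abs_of_pos hh2]
  have hr2 : r ^ 2 = h ^ 2 := sq_abs h
  calc |φ r| / h ^ 2 ≤ (ε / 2 * r ^ 2) / h ^ 2 := by gcongr
    _ = ε / 2 := by rw [hr2]; field_simp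
    _ < ε := by linarith

/-- Maximum principle for the symmetric second difference quotient. -/
lemma lemB (a b : ℝ) (hab : a < b) (u : ℝ → ℝ) (hu : ContinuousOn u (Icc a b))
    (hua : u a = 0) (hub : u b = 0) (c : ℝ → ℝ) (hc : ∀ z ∈ Ioo a b, 0 < c z)
    (hq : ∀ z ∈ Ioo a b, Tendsto (fun h : ℝ => (u (z + h) - 2 * u z + u (z - h)) / h ^ 2)
      (𝓝[≠] 0) (𝓝 (c z))) :
    ∀ x ∈ Icc a b, u x ≤ 0 := by
  obtain ⟨x0, hx0, hmax⟩ := isCompact_Icc.exists_isMaxOn (nonempty_Icc.mpr hab.le) hu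
  have hmax' : ∀ x ∈ Icc a b, u x ≤ u x0 := hmax
  have hx0le : u x0 ≤ 0 := by
    by_contra hpos
    push_neg at hpos
    have hx0ab : x0 ∈ Ioo a b := by
      rcases hx0 with ⟨h1, h2⟩
      rcases h1.lt_or_eq with h1' | h1'
      · rcases h2.lt_or_eq with h2' | h2'
        · exact ⟨h1', h2'⟩
        · exact absurd (h2' ▸ hpos) (by rw [hub]; exact lt_irrefl 0)
      · exact absurd (h1' ▸ hpos) (by rw [hua]; exact lt_irrefl 0)
    have hδ : 0 < min (x0 - a) (b - x0) := by
      rcases hx0ab with ⟨h1, h2⟩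
      exact lt_min (by linarith) (by linarith)
    have hev : ∀ᶠ h in 𝓝[≠] (0 : ℝ),
        (u (x0 + h) - 2 * u x0 + u (x0 - h)) / h ^ 2 ≤ 0 := by
      have habs : ∀ᶠ h in 𝓝 (0 : ℝ), |h - 0| < min (x0 - a) (b - x0) :=
        eventually_abs_sub_lt 0 hδ
      filter_upwards [eventually_nhdsWithin_of_eventually_nhds habs] with h hh
      rw [sub_zero] at hh
      obtain ⟨ha1, ha2⟩ := abs_lt.mp (hh.trans_le (min_le_left _ _))
      obtain ⟨hb1, hb2⟩ := abs_lt.mp (hh.trans_le (min_le_right _ _))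
      have h1 : x0 + h ∈ Icc a b := ⟨by linarith, by linarith⟩
      have h2 : x0 - h ∈ Icc a b := ⟨by linarith, by linarith⟩
      apply div_nonpos_of_nonpos_of_nonneg
      · have := hmax' _ h1
        have := hmax' _ h2
        linarith
      · positivity
    have := le_of_tendsto (hq x0 hx0ab) hev
    exact absurd this (not_le.mpr (hc x0 hx0ab))
  intro x hx
  exact le_trans (hmax' x hx) hx0le

theorem schwarz_symmetric_second_derivative (α β : ℝ) (V ψ : ℝ → ℝ)
    (hV : DifferentiableOn ℝ V (Set.Ioo α β))
    (hV' : ContinuousOn (deriv V) (Set.Ioo α β))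
    (hψ : ∀ z ∈ Set.Ioo α β,
      Filter.Tendsto (fun h : ℝ => (V (z + h) - 2 * V z + V (z - h)) / h^2)
        (𝓝[≠] 0) (𝓝 (ψ z)))
    (hψc : ContinuousOn ψ (Set.Ioo α β)) :
    ∀ z ∈ Set.Ioo α β, HasDerivAt (deriv V) (ψ z) z := by
  intro z hz
  obtain ⟨hz1, hz2⟩ := hz
  set a : ℝ := (α + z) / 2 with ha
  set b : ℝ := (z + β) / 2 with hb
  have hαa : α < a := by rw [ha]; linarith
  have haz : a < z := by rw [ha]; linarith
  have hzb : z < b := by rw [hb]; linarith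
  have hbβ : b < β := by rw [hb]; linarith
  have hab : a < b := haz.trans hzb
  have hsub : Icc a b ⊆ Ioo α β := fun x hx => ⟨lt_of_lt_of_le hαa hx.1, lt_of_le_of_lt hx.2 hbβ⟩
  have hsubo : Ioo a b ⊆ Ioo α β := (Ioo_subset_Icc_self).trans hsub
  -- clamp function and extended ψ
  set clamp : ℝ → ℝ := fun x => max a (min x b) with hclamp
  have hclampmem : ∀ x, clamp x ∈ Icc a b :=
    fun x => ⟨le_max_left _ _, max_le hab.le (min_le_right _ _)⟩
  have hclampcont : Continuous clamp := continuous_const.max (continuous_id.min continuous_const)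
  have hclampeq : ∀ x ∈ Icc a b, clamp x = x := fun x hx => by
    rw [hclamp]; simp only [min_eq_left hx.2, max_eq_right hx.1]
  set ψ' : ℝ → ℝ := fun x => ψ (clamp x) with hψ'
  have hψ'cont : Continuous ψ' :=
    (hψc.mono hsub).comp_continuous hclampcont hclampmem
  have hψ'eq : ∀ x ∈ Icc a b, ψ' x = ψ x := fun x hx => by rw [hψ']; simp [hclampeq x hx]
  -- antiderivatives
  set g : ℝ → ℝ := fun x => ∫ t in a..x, ψ' t with hg
  have hgd : ∀ x, HasDerivAt g (ψ' x) x := fun x =>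
    intervalIntegral.integral_hasDerivAt_right (hψ'cont.intervalIntegrable _ _)
      (hψ'cont.stronglyMeasurableAtFilter _ _) hψ'cont.continuousAt
  have hgcont : Continuous g := by
    rw [continuous_iff_continuousAt]; exact fun x => (hgd x).continuousAt
  set Φ : ℝ → ℝ := fun x => ∫ t in a..x, g t with hΦ
  have hΦd : ∀ x, HasDerivAt Φ (g x) x := fun x =>
    intervalIntegral.integral_hasDerivAt_right (hgcont.intervalIntegrable _ _)
      (hgcont.stronglyMeasurableAtFilter _ _) hgcont.continuousAt
  have hΦcont : Continuous Φ := by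
    rw [continuous_iff_continuousAt]; exact fun x => (hΦd x).continuousAt
  -- W = V - Φ and its symmetric quotient
  set W : ℝ → ℝ := fun x => V x - Φ x with hW
  have hWq : ∀ z' ∈ Ioo a b,
      Tendsto (fun h : ℝ => (W (z' + h) - 2 * W z' + W (z' - h)) / h ^ 2)
        (𝓝[≠] 0) (𝓝 0) := by
    intro z' hz'
    have h1 := hψ z' (hsubo hz')
    have h2 := lemA Φ g z' (ψ' z') hΦd (hgd z')
    have h3 := h1.sub h2
    rw [hψ'eq z' (Ioo_subset_Icc_self hz'), sub_self] at h3
    refine h3.congr (fun h => ?_)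
    simp only [hW]
    ring
  -- W is continuous on [a,b]
  have hWcont : ContinuousOn W (Icc a b) :=
    ((hV.continuousOn.mono hsub)).sub (hΦcont.continuousOn)
  set m : ℝ := (W b - W a) / (b - a) with hm
  set L : ℝ → ℝ := fun x => W a + m * (x - a) with hL
  have hLa : L a = W a := by simp [hL]
  have hba : b - a ≠ 0 := sub_ne_zero.mpr hab.ne'
  have hLb : L b = W b := by
    simp only [hL, hm]
    field_simp
    ring
  have hLcont : Continuous L := by fun_prop
  -- the two one-sided estimates
  have hineq : ∀ (f : ℝ → ℝ), ContinuousOn f (Icc a b) → f a = 0 → f b = 0 →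
      (∀ z' ∈ Ioo a b, Tendsto (fun h : ℝ => (f (z' + h) - 2 * f z' + f (z' - h)) / h ^ 2)
        (𝓝[≠] 0) (𝓝 0)) →
      ∀ x ∈ Icc a b, f x ≤ 0 := by
    intro f hfc hfa hfb hfq x hx
    -- for each ε > 0 apply lemB to f + ε (x-a)(x-b)
    have hε : ∀ ε : ℝ, 0 < ε → f x ≤ ε * ((x - a) * (b - x)) := by
      intro ε hεpos
      set u : ℝ → ℝ := fun y => f y + ε * ((y - a) * (y - b)) with hu
      have hucont : ContinuousOn u (Icc a b) := by
        apply hfc.add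
        fun_prop
      have hua : u a = 0 := by simp [hu, hfa]
      have hub : u b = 0 := by simp [hu, hfb]
      have huq : ∀ z' ∈ Ioo a b,
          Tendsto (fun h : ℝ => (u (z' + h) - 2 * u z' + u (z' - h)) / h ^ 2)
            (𝓝[≠] 0) (𝓝 (2 * ε)) := by
        intro z' hz'
        have h1 := (hfq z' hz').add (tendsto_const_nhds (x := 2 * ε))
        rw [zero_add] at h1
        refine h1.congr' ?_
        filter_upwards [self_mem_nhdsWithin] with h hh
        replace hh : h ≠ 0 := hh
        simp only [hu]
        field_simp
        ring
      have := lemB a b hab u hucont hua hub (fun _ => 2 * ε)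
        (fun z' _ => by positivity) huq x hx
      rw [hu] at this
      simp only at this
      nlinarith
    -- let ε → 0
    by_contra hcon
    push_neg at hcon
    set K := (x - a) * (b - x) with hKdef
    have hK : 0 ≤ K := by
      obtain ⟨h1, h2⟩ := hx
      nlinarith
    have hK1 : (0 : ℝ) < 2 * (K + 1) := by nlinarith
    have h2 := hε (f x / (2 * (K + 1))) (div_pos hcon hK1)
    have h3 : f x / (2 * (K + 1)) * K = f x * K / (2 * (K + 1)) := by ring
    rw [h3] at h2
    have h4 : f x * K / (2 * (K + 1)) < f x := (div_lt_iff₀ hK1).mpr (by nlinarith)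
    linarith
  -- apply both signs
  have hq1 : ∀ z' ∈ Ioo a b, Tendsto (fun h : ℝ =>
      ((fun y => W y - L y) (z' + h) - 2 * (fun y => W y - L y) z'
        + (fun y => W y - L y) (z' - h)) / h ^ 2) (𝓝[≠] 0) (𝓝 0) := by
    intro z' hz'
    refine (hWq z' hz').congr fun h => ?_
    have hLlin : L (z' + h) - 2 * L z' + L (z' - h) = 0 := by
      simp only [hL]; ring
    simp only
    congr 1
    linarith
  have hq2 : ∀ z' ∈ Ioo a b, Tendsto (fun h : ℝ =>
      ((fun y => L y - W y) (z' + h) - 2 * (fun y => L y - W y) z'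
        + (fun y => L y - W y) (z' - h)) / h ^ 2) (𝓝[≠] 0) (𝓝 0) := by
    intro z' hz'
    have hn := (hWq z' hz').neg
    rw [neg_zero] at hn
    refine hn.congr fun h => ?_
    have hLlin : L (z' + h) - 2 * L z' + L (z' - h) = 0 := by
      simp only [hL]; ring
    simp only
    rw [← neg_div]
    congr 1
    linarith
  have hWL : ∀ x ∈ Icc a b, W x = L x := by
    intro x hx
    have h1 : W x - L x ≤ 0 := hineq (fun y => W y - L y)
      (hWcont.sub hLcont.continuousOn) (by simp [hLa]) (by simp [hLb]) hq1 x hx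
    have h2 : L x - W x ≤ 0 := hineq (fun y => L y - W y)
      (hLcont.continuousOn.sub hWcont) (by simp [hLa]) (by simp [hLb]) hq2 x hx
    linarith
  -- conclude
  have hzab : z ∈ Ioo a b := ⟨haz, hzb⟩
  have hder : ∀ x ∈ Ioo a b, deriv V x = g x + m := by
    intro x hx
    have hΦL : HasDerivAt (fun y => Φ y + L y) (g x + m) x := by
      refine (hΦd x).add ?_
      have : HasDerivAt L (m * 1) x :=
        (((hasDerivAt_id x).sub_const a).const_mul m).const_add (W a)
      simpa using this
    have heq : V =ᶠ[𝓝 x] fun y => Φ y + L y := by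
      filter_upwards [isOpen_Ioo.mem_nhds hx] with y hy
      have := hWL y (Ioo_subset_Icc_self hy)
      simp only [hW] at this
      linarith
    rw [heq.deriv_eq]
    exact hΦL.deriv
  have hgm : HasDerivAt (fun x => g x + m) (ψ z) z := by
    have := (hgd z).add_const m
    rwa [hψ'eq z (Ioo_subset_Icc_self hzab)] at this
  refine hgm.congr_of_eventuallyEq ?_
  filter_upwards [isOpen_Ioo.mem_nhds hzab] with y hy
  exact hder y hy
end
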